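/- For Hankel determinants built from a sequence c : ℕ → ℝ, the identity G^1_n H^0_n − G^0_n H^1_n − H^0_{n+1} H^1_{n-1} = 0 holds for all n ≥ 1, where G^m_n is the Hankel-type determinant obtained from H^m_{n} by replacing the last row (c_{m+n-1},…,c_{m+2n-2}) with (c_{m+n}, …, c_{m+2n-1}). -/

import Mathlib

/-- Hankel determinant `H^m_n = det(c_{i+j+m})`. -/
noncomputable def Hk (c : ℕ → ℝ) (m n : ℕ) : ℝ :=
  (Matrix.of fun i j : Fin n => c (i.val + j.val + m)).det

/-- `G^m_n`: the Hankel determinant `H^m_n` with its last row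
`(c_{m+n-1},…,c_{m+2n-2})` replaced by `(c_{m+n},…,c_{m+2n-1})`;
by convention `G^m_0 = 0`. -/
noncomputable def Gk (c : ℕ → ℝ) (m n : ℕ) : ℝ :=
  if n = 0 then 0 else
  (Matrix.of fun i j : Fin n =>
    if i.val = n - 1 then c (m + n + j.val) else c (i.val + j.val + m)).det

/-- `E^m_n`: determinant of the `n×n` matrix with rows
`(c_{m+k},…,c_{m+k+n-2}, c_{m+k+n+1})`, i.e. the last column advanced by 2. -/
noncomputable def Ek (c : ℕ → ℝ) (m n : ℕ) : ℝ :=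
  (Matrix.of fun i j : Fin n =>
    if j.val = n - 1 then c (m + i.val + n + 1) else c (m + i.val + j.val)).det

/-- `F^m_n`: determinant of the `n×n` matrix with rows
`(c_{m+k},…,c_{m+k+n-3}, c_{m+k+n-1}, c_{m+k+n})`, i.e. column `n−2` skipped;
by convention `F^m_1 = 0`. -/
noncomputable def Fk (c : ℕ → ℝ) (m n : ℕ) : ℝ :=
  if n = 1 then 0 else
  (Matrix.of fun i j : Fin n =>
    if n - 2 ≤ j.val then c (m + i.val + j.val + 1) else c (m + i.val + j.val)).det

/-- `S^m_n`: determinant of `(c_{m+σ(i)+σ(j)})` where `σ(i) = i` for `i ≤ n−2`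
and `σ(n−1) = n`. -/
noncomputable def Sk (c : ℕ → ℝ) (m n : ℕ) : ℝ :=
  (Matrix.of fun i j : Fin n =>
    c (m + (if i.val = n - 1 then n else i.val) +
        (if j.val = n - 1 then n else j.val))).det

open Matrix Finset

variable {R : Type*} [CommRing R]

lemma detQ {m : ℕ} (u v : Fin (m+2) → R) :
    (Matrix.of fun i j : Fin (m+2) =>
      if j = 0 then u i else if j = Fin.last (m+1) then v i
      else if i = j then (1:R) else 0).det
    = u 0 * v (Fin.last (m+1)) - u (Fin.last (m+1)) * v 0 := by
  set Q : Matrix (Fin (m+2)) (Fin (m+2)) R := Matrix.of fun i j : Fin (m+2) =>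
      if j = 0 then u i else if j = Fin.last (m+1) then v i
      else if i = j then (1:R) else 0 with hQ
  have hmid : ∀ i ∈ Finset.univ, i ≠ (0 : Fin (m+2)) ∧ i ≠ Fin.last (m+1) →
      (-1 : R) ^ (i : ℕ) * Q i 0 * (Q.submatrix i.succAbove Fin.succ).det = 0 := by
    intro i _ hi
    obtain ⟨hi0, hil⟩ := hi
    have h1 : 1 ≤ (i : ℕ) := by
      rcases Nat.eq_zero_or_pos (i : ℕ) with h | h
      · exact absurd (Fin.ext h) hi0
      · exact h
    have h2 : (i : ℕ) < m + 1 := by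
      rcases Nat.lt_or_ge (i : ℕ) (m+1) with h | h
      · exact h
      · have := i.isLt; exact absurd (Fin.ext (by simp [Fin.last]; omega)) hil
    have hcol : ∀ k, (Q.submatrix i.succAbove Fin.succ) k ⟨(i : ℕ) - 1, by omega⟩ = 0 := by
      intro k
      have hsucc : Fin.succ (⟨(i:ℕ) - 1, by omega⟩ : Fin (m+1)) = i := by
        simp [Fin.ext_iff]; omega
      simp only [submatrix_apply, hsucc, hQ, of_apply]
      rw [if_neg hi0, if_neg hil, if_neg (Fin.succAbove_ne i k)]
    rw [Matrix.det_eq_zero_of_column_eq_zero _ hcol, mul_zero]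
  rw [Matrix.det_succ_column_zero]
  rw [Finset.sum_eq_add_of_mem (0 : Fin (m+2)) (Fin.last (m+1)) (Finset.mem_univ _)
      (Finset.mem_univ _) (by simp [Fin.ext_iff]) hmid]
  have hfirst : Q 0 0 = u 0 := by simp [hQ]
  have hlast0 : Q (Fin.last (m+1)) 0 = u (Fin.last (m+1)) := by
    simp [hQ]
  have hdet1 : (Q.submatrix (Fin.succ) (Fin.succ)).det = v (Fin.last (m+1)) := by
    have htri : (Q.submatrix (Fin.succ) (Fin.succ)).BlockTriangular id := by
      intro i j hij
      simp only [submatrix_apply, hQ, of_apply, id_eq] at hij ⊢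
      rw [if_neg (Fin.succ_ne_zero j), if_neg, if_neg]
      · simp only [Fin.ext_iff, Fin.val_succ]; omega
      · rw [← Fin.succ_last, Fin.succ_inj]
        intro h; subst h
        exact absurd hij (by simp [Fin.lt_def]; omega)
    rw [Matrix.det_of_upperTriangular htri]
    have hdiag : ∀ i : Fin (m+1), (Q.submatrix Fin.succ Fin.succ) i i
        = if i = Fin.last m then v (Fin.last (m+1)) else 1 := by
      intro i
      simp only [submatrix_apply, hQ, of_apply]
      rw [if_neg (Fin.succ_ne_zero i), ← Fin.succ_last]
      by_cases h : i = Fin.last m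
      · subst h; simp
      · rw [if_neg (by rwa [Fin.succ_inj])]
        simp [h]
    rw [Finset.prod_congr rfl (fun i _ => hdiag i)]
    simp
  have hdet2 : (Q.submatrix (Fin.last (m+1)).succAbove Fin.succ).det
      = (-1 : R) ^ m * v 0 := by
    rw [Fin.succAbove_last]
    rw [Matrix.det_succ_row_zero]
    have hrow : ∀ j : Fin (m+1), (Q.submatrix Fin.castSucc Fin.succ) 0 j
        = if j = Fin.last m then v 0 else 0 := by
      intro j
      simp only [submatrix_apply, hQ, of_apply]
      rw [if_neg (Fin.succ_ne_zero j), ← Fin.succ_last]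
      by_cases h : j = Fin.last m
      · subst h; simp
      · rw [if_neg (by rwa [Fin.succ_inj]), if_neg]
        · simp [h]
        · intro h'; exact Fin.succ_ne_zero j (h'.symm.trans Fin.castSucc_zero)
    rw [Finset.sum_eq_single (Fin.last m)]
    · rw [hrow, if_pos rfl]
      have hid : ((Q.submatrix Fin.castSucc Fin.succ).submatrix Fin.succ
          (Fin.last m).succAbove) = (1 : Matrix (Fin m) (Fin m) R) := by
        rw [Fin.succAbove_last]
        ext i j
        simp only [submatrix_apply, hQ, of_apply, Matrix.one_apply]
        have h1 : ¬((j.castSucc).succ = (0 : Fin (m+2))) := Fin.succ_ne_zero _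
        have h2 : ¬((j.castSucc).succ = Fin.last (m+1)) := by
          simp [Fin.ext_iff]; omega
        have h3 : (Fin.castSucc i.succ = (j.castSucc).succ) ↔ i = j := by
          simp [Fin.ext_iff]
        rw [if_neg h1, if_neg h2, if_congr h3 rfl rfl]
      rw [hid, Matrix.det_one, Fin.val_last, mul_one, mul_comm]
    · intro j _ hj
      rw [hrow, if_neg hj, mul_zero, zero_mul]
    · intro h; exact absurd (Finset.mem_univ _) h
  rw [Fin.succAbove_zero, hfirst, hlast0, hdet1, hdet2]
  have hpow : (-1 : R) ^ (m+1) * ((-1 : R) ^ m) = -1 := by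
    rw [← pow_add]
    exact Odd.neg_one_pow ⟨m, by ring⟩
  simp only [Fin.val_zero, Fin.val_last, pow_zero, one_mul]
  linear_combination (u (Fin.last (m+1)) * v 0) * hpow

lemma key (m : ℕ) (c : ℕ → R) :
    (Matrix.of fun i j : Fin (m+2) => c (i.val + j.val)).det *
      ((Matrix.of fun i j : Fin (m+1) =>
          if (i:ℕ) = m then c (m + 2 + j.val) else c (i.val + j.val + 1)).det *
        (Matrix.of fun i j : Fin (m+1) => c (i.val + j.val)).det -
       (Matrix.of fun i j : Fin (m+1) =>
          if (i:ℕ) = m then c (m + 1 + j.val) else c (i.val + j.val)).det *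
        (Matrix.of fun i j : Fin (m+1) => c (i.val + j.val + 1)).det -
       (Matrix.of fun i j : Fin (m+2) => c (i.val + j.val)).det *
        (Matrix.of fun i j : Fin m => c (i.val + j.val + 1)).det) = 0 := by
  set A : Matrix (Fin (m+2)) (Fin (m+2)) R :=
    Matrix.of fun i j : Fin (m+2) => c (i.val + j.val) with hA
  set B := A.adjugate with hB
  set r1 : Fin (m+2) := ⟨m, by omega⟩ with hr1
  set Q : Matrix (Fin (m+2)) (Fin (m+2)) R := Matrix.of fun i j : Fin (m+2) =>
      if j = 0 then B i r1 else if j = Fin.last (m+1) then B i (Fin.last (m+1))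
      else if i = j then (1:R) else 0 with hQ
  set AQ : Matrix (Fin (m+2)) (Fin (m+2)) R := Matrix.of fun i j : Fin (m+2) =>
      if j = 0 then (if i = r1 then A.det else 0)
      else if j = Fin.last (m+1) then (if i = Fin.last (m+1) then A.det else 0)
      else c (i.val + j.val) with hAQ
  -- value of succAbove at r1
  have hval : ∀ i : Fin (m+1), ((r1.succAbove i : Fin (m+2)) : ℕ)
      = if (i:ℕ) < m then (i:ℕ) else (i:ℕ)+1 := by
    intro i
    simp [Fin.succAbove, Fin.lt_def, apply_ite (Fin.val)]
    rfl
  -- step 1 : A * Q = AQ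
  have step1 : A * Q = AQ := by
    ext i j
    rw [Matrix.mul_apply]
    by_cases hj0 : j = 0
    · subst hj0
      have h' := congrFun (congrFun (Matrix.mul_adjugate A) i) r1
      rw [Matrix.mul_apply] at h'
      simp only [Matrix.smul_apply, Matrix.one_apply, smul_eq_mul, mul_ite, mul_one,
        mul_zero] at h'
      simpa [hQ, hAQ] using h'
    · by_cases hjl : j = Fin.last (m+1)
      · subst hjl
        have h' := congrFun (congrFun (Matrix.mul_adjugate A) i) (Fin.last (m+1))
        rw [Matrix.mul_apply] at h'
        simp only [Matrix.smul_apply, Matrix.one_apply, smul_eq_mul, mul_ite, mul_one,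
          mul_zero] at h'
        have hne : ¬(Fin.last (m+1) = (0 : Fin (m+2))) := by simp [Fin.ext_iff]
        simpa [hQ, hAQ, hne] using h'
      · simp only [hQ, hAQ, of_apply, if_neg hj0, if_neg hjl, mul_ite, mul_one, mul_zero]
        simp [Finset.sum_ite_eq', hA]
  -- step 2 : det AQ
  have step2 : AQ.det = (-1:R)^m * A.det * (A.det *
      (Matrix.of fun i j : Fin m => c (i.val + j.val + 1)).det) := by
    rw [Matrix.det_succ_column_zero]
    rw [Finset.sum_eq_single r1]
    · have hAQ0 : AQ r1 0 = A.det := by simp [hAQ]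
      have hr1v : ((r1 : Fin (m+2)) : ℕ) = m := rfl
      rw [hAQ0, hr1v]
      congr 1
      -- det of the n×n minor M1
      rw [Matrix.det_succ_column _ (Fin.last m)]
      rw [Finset.sum_eq_single (Fin.last m)]
      · have hentry : (AQ.submatrix r1.succAbove Fin.succ) (Fin.last m) (Fin.last m)
            = A.det := by
          have hrow : r1.succAbove (Fin.last m) = Fin.last (m+1) := by
            simp [Fin.ext_iff, hval]
          have hcol : Fin.succ (Fin.last m) = Fin.last (m+1) := Fin.succ_last m
          simp only [submatrix_apply, hrow, hcol, hAQ, of_apply]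
          have h0 : ¬(Fin.last (m+1) = (0 : Fin (m+2))) := by simp [Fin.ext_iff]
          simp [h0]
        rw [hentry]
        have hsign : (-1:R)^((Fin.last m : ℕ) + (Fin.last m : ℕ)) = 1 :=
          Even.neg_one_pow ⟨m, by simp⟩
        rw [hsign, one_mul]
        congr 1
        congr 1
        -- inner (m × m) minor equals the Hankel H^1_{m}
        ext i j
        have hrow : ((r1.succAbove ((Fin.last m).succAbove i) : Fin (m+2)) : ℕ)
            = (i : ℕ) := by
          rw [Fin.succAbove_last, hval]
          simp [Fin.lt_def, i.isLt]
        have hcolv : ((Fin.succ ((Fin.last m).succAbove j) : Fin (m+2)) : ℕ)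
            = (j : ℕ) + 1 := by
          rw [Fin.succAbove_last]; simp
        have h1 : ¬(Fin.succ ((Fin.last m).succAbove j) = (0 : Fin (m+2))) :=
          Fin.succ_ne_zero _
        have h2 : ¬(Fin.succ ((Fin.last m).succAbove j) = Fin.last (m+1)) := by
          simp only [Fin.ext_iff, hcolv, Fin.val_last]
          omega
        simp only [submatrix_apply, hAQ, of_apply]
        rw [if_neg h1, if_neg h2, hrow, hcolv]
        exact congrArg c (by omega)
      · intro k _ hk
        have : (AQ.submatrix r1.succAbove Fin.succ) k (Fin.last m) = 0 := by
          have hcol : Fin.succ (Fin.last m) = Fin.last (m+1) := Fin.succ_last m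
          have hkm : (k:ℕ) ≠ m := by
            intro h; exact hk (Fin.ext (by simpa using h))
          have hkv : (k:ℕ) < m + 1 := k.isLt
          have hrow : ¬(r1.succAbove k = Fin.last (m+1)) := by
            simp only [Fin.ext_iff, hval, Fin.val_last]
            split <;> omega
          simp only [submatrix_apply, hcol, hAQ, of_apply]
          have h0 : ¬(Fin.last (m+1) = (0 : Fin (m+2))) := by simp [Fin.ext_iff]
          simp [h0, hrow]
        rw [this, mul_zero, zero_mul]
      · intro h; exact absurd (Finset.mem_univ _) h
    · intro i _ hi
      have : AQ i 0 = 0 := by simp [hAQ, hi]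
      rw [this, mul_zero, zero_mul]
    · intro h; exact absurd (Finset.mem_univ _) h
  -- step 3 : det Q
  have step3 : Q.det = B 0 r1 * B (Fin.last (m+1)) (Fin.last (m+1))
      - B (Fin.last (m+1)) r1 * B 0 (Fin.last (m+1)) :=
    detQ (fun i => B i r1) (fun i => B i (Fin.last (m+1)))
  -- step 4 : adjugate entries as signed minors
  have aG1 : B 0 r1 = (-1:R)^m * (Matrix.of fun i j : Fin (m+1) =>
      if (i:ℕ) = m then c (m + 2 + j.val) else c (i.val + j.val + 1)).det := by
    rw [hB, Matrix.adjugate_fin_succ_eq_det_submatrix]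
    have he : ((r1 : Fin (m+2)) : ℕ) + ((0 : Fin (m+2)) : ℕ) = m := by simp [hr1]
    rw [he]
    congr 1
    congr 1
    ext i j
    simp only [submatrix_apply, hA, of_apply, Fin.succAbove_zero, Fin.val_succ]
    by_cases h : (i:ℕ) = m
    · rw [if_pos h]
      rw [show ((r1.succAbove i : Fin (m+2)) : ℕ) = m + 1 by
        rw [hval, if_neg (by omega)]; omega]
      exact congrArg c (by omega)
    · rw [if_neg h]
      rw [show ((r1.succAbove i : Fin (m+2)) : ℕ) = (i:ℕ) by
        rw [hval, if_pos (show (i:ℕ) < m by have := i.isLt; omega)]]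
      exact congrArg c (by omega)
  have aH0 : B (Fin.last (m+1)) (Fin.last (m+1))
      = (Matrix.of fun i j : Fin (m+1) => c (i.val + j.val)).det := by
    rw [hB, Matrix.adjugate_fin_succ_eq_det_submatrix]
    have he : ((Fin.last (m+1) : Fin (m+2)) : ℕ) + ((Fin.last (m+1) : Fin (m+2)) : ℕ)
        = (m+1) + (m+1) := by simp
    rw [he, Even.neg_one_pow ⟨m+1, rfl⟩, one_mul]
    congr 1
    ext i j
    simp [Fin.succAbove_last, hA]
  have aH1 : B 0 (Fin.last (m+1)) = (-1:R)^(m+1) *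
      (Matrix.of fun i j : Fin (m+1) => c (i.val + j.val + 1)).det := by
    rw [hB, Matrix.adjugate_fin_succ_eq_det_submatrix]
    have he : ((Fin.last (m+1) : Fin (m+2)) : ℕ) + ((0 : Fin (m+2)) : ℕ) = m+1 := by simp
    rw [he]
    congr 1
    congr 1
    ext i j
    simp only [submatrix_apply, hA, of_apply, Fin.succAbove_zero, Fin.succAbove_last,
      Fin.val_succ, Fin.coe_castSucc]
    exact congrArg c (by omega)
  have aG0 : B (Fin.last (m+1)) r1 = - (Matrix.of fun i j : Fin (m+1) =>
      if (i:ℕ) = m then c (m + 1 + j.val) else c (i.val + j.val)).det := by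
    rw [hB, Matrix.adjugate_fin_succ_eq_det_submatrix]
    have he : ((r1 : Fin (m+2)) : ℕ) + ((Fin.last (m+1) : Fin (m+2)) : ℕ)
        = m + (m+1) := by simp [hr1]
    rw [he, Odd.neg_one_pow ⟨m, by ring⟩]
    rw [neg_one_mul, neg_inj]
    congr 1
    ext i j
    simp only [submatrix_apply, hA, of_apply, Fin.succAbove_last, Fin.coe_castSucc]
    by_cases h : (i:ℕ) = m
    · rw [if_pos h]
      rw [show ((r1.succAbove i : Fin (m+2)) : ℕ) = m + 1 by
        rw [hval, if_neg (by omega)]; omega]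
    · rw [if_neg h]
      rw [show ((r1.succAbove i : Fin (m+2)) : ℕ) = (i:ℕ) by
        rw [hval, if_pos (show (i:ℕ) < m by have := i.isLt; omega)]]
  -- step 5 : assemble
  have E : A.det * Q.det = (-1:R)^m * A.det * (A.det *
      (Matrix.of fun i j : Fin m => c (i.val + j.val + 1)).det) := by
    rw [← Matrix.det_mul, step1, step2]
  rw [step3, aG1, aH0, aH1, aG0, pow_succ] at E
  have hs : (-1:R)^m * (-1:R)^m = 1 := by
    rw [← pow_add]; exact Even.neg_one_pow ⟨m, rfl⟩
  linear_combination ((-1:R)^m) * E - (A.det *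
      ((Matrix.of fun i j : Fin (m+1) =>
          if (i:ℕ) = m then c (m + 2 + j.val) else c (i.val + j.val + 1)).det *
        (Matrix.of fun i j : Fin (m+1) => c (i.val + j.val)).det -
       (Matrix.of fun i j : Fin (m+1) =>
          if (i:ℕ) = m then c (m + 1 + j.val) else c (i.val + j.val)).det *
        (Matrix.of fun i j : Fin (m+1) => c (i.val + j.val + 1)).det -
       A.det * (Matrix.of fun i j : Fin m => c (i.val + j.val + 1)).det)) * hs


lemma JJ {R : Type*} [CommRing R] (N : ℕ) :
    (Matrix.of fun i j : Fin (N+1) => if (i:ℕ) + (j:ℕ) = N then (1:R) else 0) *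
    (Matrix.of fun i j : Fin (N+1) => if (i:ℕ) + (j:ℕ) = N then (1:R) else 0) = 1 := by
  ext i k
  rw [Matrix.mul_apply]
  rw [Finset.sum_eq_single (⟨N - (i:ℕ), by omega⟩ : Fin (N+1))]
  · simp only [of_apply, Matrix.one_apply]
    have hi : (i:ℕ) < N + 1 := i.isLt
    rw [if_pos (show (i:ℕ) + (N - (i:ℕ)) = N by omega), one_mul]
    by_cases h : i = k
    · subst h
      rw [if_pos (by have : (i:ℕ) < N + 1 := i.isLt; omega), if_pos rfl]
    · rw [if_neg, if_neg h]
      intro hc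
      exact h (Fin.ext (by have := k.isLt; omega))
  · intro j _ hj
    simp only [of_apply]
    rw [if_neg, zero_mul]
    intro hij
    exact hj (Fin.ext (by have := j.isLt; simp; omega))
  · intro h; exact absurd (Finset.mem_univ _) h

open Polynomial in
theorem G1_identity' (c : ℕ → ℝ) (m : ℕ) :
    (Matrix.of fun i j : Fin (m+1) =>
        if (i:ℕ) = m then c (m + 2 + j.val) else c (i.val + j.val + 1)).det *
      (Matrix.of fun i j : Fin (m+1) => c (i.val + j.val)).det -
    (Matrix.of fun i j : Fin (m+1) =>
        if (i:ℕ) = m then c (m + 1 + j.val) else c (i.val + j.val)).det *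
      (Matrix.of fun i j : Fin (m+1) => c (i.val + j.val + 1)).det -
    (Matrix.of fun i j : Fin (m+2) => c (i.val + j.val)).det *
      (Matrix.of fun i j : Fin m => c (i.val + j.val + 1)).det = 0 := by
  set cp : ℕ → ℝ[X] := fun k =>
    if k = m + 1 then Polynomial.C (c k) + Polynomial.X else Polynomial.C (c k) with hcp
  set A0 : Matrix (Fin (m+2)) (Fin (m+2)) ℝ :=
    Matrix.of fun i j : Fin (m+2) => c (i.val + j.val) with hA0
  set Jr : Matrix (Fin (m+2)) (Fin (m+2)) ℝ :=
    Matrix.of fun i j : Fin (m+2) => if (i:ℕ) + (j:ℕ) = m + 1 then (1:ℝ) else 0 with hJr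
  set Jp : Matrix (Fin (m+2)) (Fin (m+2)) ℝ[X] :=
    Matrix.of fun i j : Fin (m+2) => if (i:ℕ) + (j:ℕ) = m + 1 then (1:ℝ[X]) else 0 with hJp
  set M0 : Matrix (Fin (m+2)) (Fin (m+2)) ℝ := -(Jr * A0) with hM0
  set Ap : Matrix (Fin (m+2)) (Fin (m+2)) ℝ[X] :=
    Matrix.of fun i j : Fin (m+2) => cp (i.val + j.val) with hAp
  have hJmap : Jr.map Polynomial.C = Jp := by
    ext i j
    simp [hJr, hJp, apply_ite Polynomial.C]
  have hmapneg : M0.map Polynomial.C = -((Jr * A0).map Polynomial.C) := by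
    refine Matrix.ext fun i j => ?_
    simp only [hM0, Matrix.map_apply, Matrix.neg_apply, map_neg]
  have h1 : charmatrix M0 = Matrix.scalar _ Polynomial.X + Jp * (A0.map Polynomial.C) := by
    rw [charmatrix, RingHom.mapMatrix_apply, hmapneg, sub_neg_eq_add, Matrix.map_mul, hJmap]
  have hC : Ap = Jp * charmatrix M0 := by
    rw [h1, Matrix.mul_add, ← Matrix.mul_assoc]
    rw [show Jp * Jp = 1 from JJ (m+1)]
    rw [Matrix.one_mul]
    ext i j
    rw [Matrix.add_apply, Matrix.scalar_apply, Matrix.mul_diagonal]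
    simp only [hAp, hJp, hA0, of_apply, Matrix.map_apply, hcp]
    split_ifs with h
    · ring
    · ring
  have hJdet : Jp.det * Jp.det = 1 := by
    rw [← Matrix.det_mul, show Jp * Jp = 1 from JJ (m+1), Matrix.det_one]
  have hApne : Ap.det ≠ 0 := by
    intro h
    rw [hC, Matrix.det_mul] at h
    rcases mul_eq_zero.mp h with h | h
    · rw [h, zero_mul] at hJdet
      exact zero_ne_one hJdet
    · exact (Matrix.charpoly_monic M0).ne_zero h
  have hkeyP := key m cp
  have hBrack : (Matrix.of fun i j : Fin (m+1) =>
          if (i:ℕ) = m then cp (m + 2 + j.val) else cp (i.val + j.val + 1)).det *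
        (Matrix.of fun i j : Fin (m+1) => cp (i.val + j.val)).det -
      (Matrix.of fun i j : Fin (m+1) =>
          if (i:ℕ) = m then cp (m + 1 + j.val) else cp (i.val + j.val)).det *
        (Matrix.of fun i j : Fin (m+1) => cp (i.val + j.val + 1)).det -
      (Matrix.of fun i j : Fin (m+2) => cp (i.val + j.val)).det *
        (Matrix.of fun i j : Fin m => cp (i.val + j.val + 1)).det = 0 := by
    rcases mul_eq_zero.mp hkeyP with h | h
    · exact absurd h hApne
    · exact h
  -- evaluate at 0
  set φ : ℝ[X] →+* ℝ := Polynomial.evalRingHom (0:ℝ) with hφdef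
  have hφ : ∀ k, φ (cp k) = c k := by
    intro k
    simp only [hcp, hφdef, apply_ite (Polynomial.evalRingHom (0:ℝ))]
    split_ifs <;> simp
  have h0 := congrArg φ hBrack
  simp only [map_zero, map_sub, _root_.map_mul] at h0
  rw [RingHom.map_det, RingHom.map_det, RingHom.map_det, RingHom.map_det,
    RingHom.map_det, RingHom.map_det] at h0
  have e1 : ((Matrix.of fun i j : Fin (m+1) =>
      if (i:ℕ) = m then cp (m + 2 + j.val) else cp (i.val + j.val + 1)).map φ)
      = (Matrix.of fun i j : Fin (m+1) =>
      if (i:ℕ) = m then c (m + 2 + j.val) else c (i.val + j.val + 1)) := by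
    ext i j
    simp only [Matrix.map_apply, of_apply]
    rw [apply_ite φ, hφ, hφ]
  have e2 : ((Matrix.of fun i j : Fin (m+1) => cp (i.val + j.val)).map φ)
      = (Matrix.of fun i j : Fin (m+1) => c (i.val + j.val)) := by
    ext i j; simp only [Matrix.map_apply, of_apply, hφ]
  have e3 : ((Matrix.of fun i j : Fin (m+1) =>
      if (i:ℕ) = m then cp (m + 1 + j.val) else cp (i.val + j.val)).map φ)
      = (Matrix.of fun i j : Fin (m+1) =>
      if (i:ℕ) = m then c (m + 1 + j.val) else c (i.val + j.val)) := by
    ext i j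
    simp only [Matrix.map_apply, of_apply]
    rw [apply_ite φ, hφ, hφ]
  have e4 : ((Matrix.of fun i j : Fin (m+1) => cp (i.val + j.val + 1)).map φ)
      = (Matrix.of fun i j : Fin (m+1) => c (i.val + j.val + 1)) := by
    ext i j; simp only [Matrix.map_apply, of_apply, hφ]
  have e5 : ((Matrix.of fun i j : Fin (m+2) => cp (i.val + j.val)).map φ)
      = (Matrix.of fun i j : Fin (m+2) => c (i.val + j.val)) := by
    ext i j; simp only [Matrix.map_apply, of_apply, hφ]
  have e6 : ((Matrix.of fun i j : Fin m => cp (i.val + j.val + 1)).map φ)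
      = (Matrix.of fun i j : Fin m => c (i.val + j.val + 1)) := by
    ext i j; simp only [Matrix.map_apply, of_apply, hφ]
  simp only [RingHom.mapMatrix_apply] at h0
  rw [e1, e2, e3, e4, e5, e6] at h0
  rw [hA0]
  exact h0

/-- `G¹_n H⁰_n − G⁰_n H¹_n − H⁰_{n+1} H¹_{n-1} = 0` for `n ≥ 1`. -/
theorem G1_identity (c : ℕ → ℝ) (n : ℕ) (hn : 1 ≤ n) :
    Gk c 1 n * Hk c 0 n - Gk c 0 n * Hk c 1 n - Hk c 0 (n + 1) * Hk c 1 (n - 1) = 0 := by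
  obtain ⟨m, rfl⟩ : ∃ m, n = m + 1 := ⟨n - 1, by omega⟩
  have h := G1_identity' c m
  have eG1 : Gk c 1 (m+1) = (Matrix.of fun i j : Fin (m+1) =>
      if (i:ℕ) = m then c (m + 2 + j.val) else c (i.val + j.val + 1)).det := by
    unfold Gk
    rw [if_neg (by omega)]
    congr 1
    ext i j
    simp only [Matrix.of_apply, Nat.add_sub_cancel]
    by_cases hi : (i:ℕ) = m
    · rw [if_pos hi, if_pos hi]
      exact congrArg c (by omega)
    · rw [if_neg hi, if_neg hi]
  have eG0 : Gk c 0 (m+1) = (Matrix.of fun i j : Fin (m+1) =>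
      if (i:ℕ) = m then c (m + 1 + j.val) else c (i.val + j.val)).det := by
    unfold Gk
    rw [if_neg (by omega)]
    congr 1
    ext i j
    simp only [Matrix.of_apply, Nat.add_sub_cancel]
    by_cases hi : (i:ℕ) = m
    · rw [if_pos hi, if_pos hi]
      exact congrArg c (by omega)
    · rw [if_neg hi, if_neg hi]
      exact congrArg c (by omega)
  have eH0 : Hk c 0 (m+1) = (Matrix.of fun i j : Fin (m+1) => c (i.val + j.val)).det := rfl
  have eH1 : Hk c 1 (m+1)
      = (Matrix.of fun i j : Fin (m+1) => c (i.val + j.val + 1)).det := rfl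
  have eHA : Hk c 0 (m+1+1)
      = (Matrix.of fun i j : Fin (m+2) => c (i.val + j.val)).det := rfl
  have eH1' : Hk c 1 (m+1-1)
      = (Matrix.of fun i j : Fin m => c (i.val + j.val + 1)).det := rfl
  rw [eG1, eG0, eH0, eH1, eHA, eH1']
  exact h
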